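/- Let A ∈ L(X) and let h : 𝔻₁ → X be injective and A-spirallike, i.e. exp(−tA)(h(𝔻₁)) ⊆ h(𝔻₁) for all t ≥ 0; set F_t := h⁻¹ ∘ exp(−tA) ∘ h : 𝔻₁ → 𝔻₁. Let Γ(h,·) and Γ(exp(−tA)∘h,·) : 𝔻₁ → L(Y) be given with Γ(h,x) invertible, satisfying Γ(exp(−tA)∘h, x) = exp(−tC) ∘ Γ(h,x) for a fixed C ∈ L(Y) and all t ≥ 0, x ∈ 𝔻₁, together with the norm bound ‖Γ(h, F_t(x))⁻¹ ∘ Γ(exp(−tA)∘h, x)‖_{L(Y)} ≤ p(‖F_t(x)‖)/p(‖x‖). Let B ∈ L(Y) satisfy ‖exp(−tB)‖_{L(Y)} ≤ 1 for all t ≥ 0, B∘C = C∘B, and B∘Γ(h,x) = Γ(h,x)∘B for all x ∈ 𝔻₁. Then for every (z,w) in the image Φ[h](𝔻) of the extension Φ[h](x,y) := (h(x), Γ(h,x)y), and every t ≥ 0, the point (exp(−tA)z, exp(−t(B+C))w) also belongs to Φ[h](𝔻); i.e. Φ[h](𝔻) is invariant under the linear semigroup exp(−t·diag(A, B+C)),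 so Φ[h] is diag(A, B+C)-spirallike (as a block-diagonal operator on X × Y). -/

import Mathlib

open Set Filter Topology

/-- Theorem 5.1 (spirallikeness of the extension): let `h : 𝔻₁ → X` be injective and
`A`-spirallike, `F_t = h⁻¹ ∘ exp(−tA) ∘ h`. If `Γ(exp(−tA)∘h, x) = exp(−tC) ∘ Γ(h,x)`
with the norm bound `‖Γ(h, F_t x)⁻¹ ∘ Γ(exp(−tA)∘h, x)‖ ≤ p ‖F_t x‖ / p ‖x‖`, and
`B ∈ L(Y)` satisfies `‖exp(−tB)‖ ≤ 1`, commutes with `C` and with every `Γ(h,x)`, then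
the image of `Φ[h](x,y) = (h x, Γ(h,x) y)` is invariant under
`(z,w) ↦ (exp(−tA) z, exp(−t(B+C)) w)` for all `t ≥ 0`; i.e. `Φ[h]` is
`diag(A, B+C)`-spirallike. -/
theorem stmt_14 {X Y : Type*} [NormedAddCommGroup X] [NormedSpace ℂ X] [CompleteSpace X]
    [NormedAddCommGroup Y] [NormedSpace ℂ Y] [CompleteSpace Y]
    (p : ℝ → ℝ)
    (hp_cont : ContinuousOn p (Icc 0 1))
    (hp_maps : ∀ s ∈ Icc (0:ℝ) 1, p s ∈ Icc (0:ℝ) 1)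
    (hp0 : p 0 = 1) (hp1 : p 1 = 0)
    (hp_anti : StrictAntiOn p (Icc 0 1))
    (D : Set (X × Y))
    (hD : D = {z : X × Y | ‖z.1‖ < 1 ∧ ‖z.2‖ < 1 ∧ ‖z.2‖ < p ‖z.1‖})
    (A : X →L[ℂ] X)
    (h : X → X) (hinj : InjOn h {x : X | ‖x‖ < 1})
    (hspiral : ∀ t : ℝ, 0 ≤ t → ∀ z ∈ h '' {x : X | ‖x‖ < 1},
      (NormedSpace.exp ((-(t : ℂ)) • A)) z ∈ h '' {x : X | ‖x‖ < 1})
    (hinv : X → X) (hli : ∀ x : X, ‖x‖ < 1 → hinv (h x) = x)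
    (F : ℝ → X → X)
    (hF : ∀ (t : ℝ) (x : X), F t x = hinv ((NormedSpace.exp ((-(t : ℂ)) • A)) (h x)))
    (C : Y →L[ℂ] Y)
    (Γh : X → (Y ≃L[ℂ] Y))              -- `Γ(h,·)`, invertible
    (Γeh : ℝ → X → Y →L[ℂ] Y)           -- `Γ(exp(−tA)∘h,·)`
    (hΓ_exp : ∀ t : ℝ, 0 ≤ t → ∀ x : X, ‖x‖ < 1 →
      Γeh t x = (NormedSpace.exp ((-(t : ℂ)) • C)).comp (Γh x : Y →L[ℂ] Y))
    (hΓ_bound : ∀ t : ℝ, 0 ≤ t → ∀ x : X, ‖x‖ < 1 →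
      ‖((Γh (F t x)).symm : Y →L[ℂ] Y).comp (Γeh t x)‖ ≤ p ‖F t x‖ / p ‖x‖)
    (B : Y →L[ℂ] Y)
    (hB_contr : ∀ t : ℝ, 0 ≤ t → ‖NormedSpace.exp ((-(t : ℂ)) • B)‖ ≤ 1)
    (hBC : B.comp C = C.comp B)
    (hBΓ : ∀ x : X, ‖x‖ < 1 →
      B.comp (Γh x : Y →L[ℂ] Y) = (Γh x : Y →L[ℂ] Y).comp B)
    (Φh : X × Y → X × Y)
    (hΦh : ∀ z : X × Y, Φh z = (h z.1, Γh z.1 z.2)) :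
    ∀ ζ ∈ Φh '' D, ∀ t : ℝ, 0 ≤ t →
      (((NormedSpace.exp ((-(t : ℂ)) • A)) ζ.1,
        (NormedSpace.exp ((-(t : ℂ)) • (B + C))) ζ.2) : X × Y) ∈ Φh '' D := by

  rintro ζ ⟨z, hzD, rfl⟩ t ht
  rw [hD] at hzD
  obtain ⟨hz1, hz2, hz3⟩ := hzD
  obtain ⟨x', hx', hhx'⟩ := hspiral t ht (h z.1) ⟨z.1, hz1, rfl⟩
  have hFt : F t z.1 = x' := by rw [hF, ← hhx', hli x' hx']
  have hFtx : ‖F t z.1‖ < 1 := hFt ▸ hx'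
  have hhFt : h (F t z.1) = NormedSpace.exp ((-(t : ℂ)) • A) (h z.1) := by
    rw [hFt, hhx']
  -- positivity of p
  have hmemx : ‖z.1‖ ∈ Icc (0:ℝ) 1 := ⟨norm_nonneg _, hz1.le⟩
  have hmemF : ‖F t z.1‖ ∈ Icc (0:ℝ) 1 := ⟨norm_nonneg _, hFtx.le⟩
  have hpx : 0 < p ‖z.1‖ := by
    have := hp_anti hmemx (by norm_num : (1:ℝ) ∈ Icc (0:ℝ) 1) hz1
    rw [hp1] at this; exact this
  have hpF : 0 < p ‖F t z.1‖ := by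
    have := hp_anti hmemF (by norm_num : (1:ℝ) ∈ Icc (0:ℝ) 1) hFtx
    rw [hp1] at this; exact this
  have hpF1 : p ‖F t z.1‖ ≤ 1 := (hp_maps _ hmemF).2
  -- split exponential
  set G : Y →L[ℂ] Y := (Γh (F t z.1) : Y →L[ℂ] Y)
  set EB := NormedSpace.exp ((-(t : ℂ)) • B)
  have hsplit : NormedSpace.exp ((-(t : ℂ)) • (B + C))
      = EB * NormedSpace.exp ((-(t : ℂ)) • C) := by
    rw [smul_add]
    have hc : Commute B C := hBC
    let +nondep : NormedAlgebra ℚ (Y →L[ℂ] Y) := .restrictScalars ℚ ℂ (Y →L[ℂ] Y)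
    exact NormedSpace.exp_add_of_commute ((hc.smul_left _).smul_right _)
  -- commutation of EB with G
  have hcommG : Commute EB G := by
    refine Commute.exp_left ?_
    have hc : Commute B G := hBΓ (F t z.1) hFtx
    exact hc.smul_left _
  -- the candidate preimage second coordinate
  set u : Y := (Γh (F t z.1)).symm (Γeh t z.1 z.2)
  set y' : Y := EB u
  have hGu : G u = Γeh t z.1 z.2 := (Γh (F t z.1)).apply_symm_apply _
  have hkey : NormedSpace.exp ((-(t : ℂ)) • (B + C)) ((Γh z.1 : Y →L[ℂ] Y) z.2) = G y' := by
    have h1 : NormedSpace.exp ((-(t : ℂ)) • C) ((Γh z.1 : Y →L[ℂ] Y) z.2)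
        = Γeh t z.1 z.2 := by
      rw [hΓ_exp t ht z.1 hz1]; rfl
    have h2 : EB (G u) = G (EB u) := by
      have := congrArg (fun f : Y →L[ℂ] Y => f u) hcommG.eq
      simpa using this
    calc NormedSpace.exp ((-(t : ℂ)) • (B + C)) ((Γh z.1 : Y →L[ℂ] Y) z.2)
        = EB (NormedSpace.exp ((-(t : ℂ)) • C) ((Γh z.1 : Y →L[ℂ] Y) z.2)) := by
          rw [hsplit, ContinuousLinearMap.mul_apply]
      _ = EB (G u) := by rw [h1, hGu]
      _ = G y' := h2
  -- norm bound on y'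
  have hu : ‖u‖ ≤ p ‖F t z.1‖ / p ‖z.1‖ * ‖z.2‖ := by
    have : u = (((Γh (F t z.1)).symm : Y →L[ℂ] Y).comp (Γeh t z.1)) z.2 := rfl
    rw [this]
    calc ‖(((Γh (F t z.1)).symm : Y →L[ℂ] Y).comp (Γeh t z.1)) z.2‖
        ≤ ‖((Γh (F t z.1)).symm : Y →L[ℂ] Y).comp (Γeh t z.1)‖ * ‖z.2‖ :=
          ContinuousLinearMap.le_opNorm _ _
      _ ≤ p ‖F t z.1‖ / p ‖z.1‖ * ‖z.2‖ := by
          gcongr; exact hΓ_bound t ht z.1 hz1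
  have hy' : ‖y'‖ < p ‖F t z.1‖ := by
    have h1 : ‖y'‖ ≤ ‖EB‖ * ‖u‖ := ContinuousLinearMap.le_opNorm _ _
    have h2 : ‖y'‖ ≤ ‖u‖ := by
      calc ‖y'‖ ≤ ‖EB‖ * ‖u‖ := h1
        _ ≤ 1 * ‖u‖ := by gcongr; exact hB_contr t ht
        _ = ‖u‖ := one_mul _
    calc ‖y'‖ ≤ p ‖F t z.1‖ / p ‖z.1‖ * ‖z.2‖ := h2.trans hu
      _ < p ‖F t z.1‖ / p ‖z.1‖ * p ‖z.1‖ := by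
          apply mul_lt_mul_of_pos_left hz3 (div_pos hpF hpx)
      _ = p ‖F t z.1‖ := div_mul_cancel₀ _ hpx.ne'
  refine ⟨(F t z.1, y'), ?_, ?_⟩
  · rw [hD]
    exact ⟨hFtx, hy'.trans_le hpF1, hy'⟩
  · rw [hΦh, hΦh z]
    simp only [Prod.mk.injEq]
    exact ⟨hhFt, hkey.symm⟩
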